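/- Let u, v : ℝ → ℝ with a common fixed point x*, where u is C^1 near x* with u(x*) = x*, u'(x*) = 1, and v is C^2 near x* with v(x*) = x* and v'(x*) ≠ 1. Define the combined iteration function h(x) = (v(x) - u(x)·v'(x)) / (1 - v'(x)). Then h(x*) = x* and h'(x*) = 0. -/

import Mathlib

/-- the combined iteration function `C(u,v)` has a superattracting
fixed point at `x*`. -/
theorem stmt_2 (xs : ℝ) (u v h : ℝ → ℝ)
    (hu : ContDiffAt ℝ 1 u xs) (hv : ContDiffAt ℝ 2 v xs)
    (hufix : u xs = xs) (hu1 : deriv u xs = 1)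
    (hvfix : v xs = xs) (hv1 : deriv v xs ≠ 1)
    (hh : ∀ x, h x = (v x - u x * deriv v x) / (1 - deriv v x)) :
    h xs = xs ∧ deriv h xs = 0 := by
  have hden : 1 - deriv v xs ≠ 0 := sub_ne_zero.mpr (Ne.symm hv1)
  have hfix : h xs = xs := by
    rw [hh, hvfix, hufix]
    field_simp
  refine ⟨hfix, ?_⟩
  -- derivative of deriv v
  have hdv : ContDiffAt ℝ 1 (fderiv ℝ v) xs := hv.fderiv_right le_rfl
  have hdv1 : DifferentiableAt ℝ (fun x => fderiv ℝ v x 1) xs :=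
    (hdv.differentiableAt one_ne_zero).clm_apply (differentiableAt_const _)
  have hdveq : deriv v = fun x => fderiv ℝ v x 1 := by
    funext x; rw [← fderiv_apply_one_eq_deriv]
  have hdvdiff : DifferentiableAt ℝ (deriv v) xs := by rw [hdveq]; exact hdv1
  have hdvd : HasDerivAt (deriv v) (deriv (deriv v) xs) xs := hdvdiff.hasDerivAt
  have hud : HasDerivAt u 1 xs := by
    have := (hu.differentiableAt one_ne_zero).hasDerivAt
    rwa [hu1] at this
  have hvd : HasDerivAt v (deriv v xs) xs :=
    (hv.differentiableAt (by norm_num)).hasDerivAt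
  set c := deriv v xs with hc
  set d := deriv (deriv v) xs with hd
  have hnum : HasDerivAt (fun x => v x - u x * deriv v x) (c - (1 * c + xs * d)) xs := by
    have := hvd.sub (hud.mul hdvd)
    rwa [hufix] at this
  have hdenom : HasDerivAt (fun x => 1 - deriv v x) (0 - d) xs :=
    (hasDerivAt_const xs (1:ℝ)).sub hdvd
  have hdiv : HasDerivAt (fun x => (v x - u x * deriv v x) / (1 - deriv v x)) _ xs :=
    hnum.div hdenom hden
  have heq : deriv h xs = deriv (fun x => (v x - u x * deriv v x) / (1 - deriv v x)) xs := by
    congr 1; funext x; exact hh x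
  rw [heq, hdiv.deriv, hvfix, hufix]
  field_simp
  ring
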